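/- If for each n an SMML estimator with n cut-points exists (i.e. I₁: A_n → ℝ attains a global minimum at some a^(n)), then the sequence n ↦ I₁(a^(n)) is non-increasing. -/

import Mathlib

open MeasureTheory Set
open Filter Topology

/-- If for each `n ≥ 1` an SMML estimator with `n` cut-points exists, i.e. `I₁ : A_n → ℝ`
attains a global minimum at some `a⁽ⁿ⁾`, then `n ↦ I₁(a⁽ⁿ⁾)` is non-increasing. -/
theorem smml_min_code_length_antitone
    (X : Set ℝ) (hX : IsOpen X)
    (r : ℝ → ℝ) (hr : Continuous r) (hrpos : ∀ x, 0 < r x)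
    (hint : Integrable r) (hnorm : ∫ x, r x = 1)
    (hint1 : Integrable (fun x => x * r x))
    (ψ μ dμ : ℝ → ℝ) (hψ : ∀ θ, HasDerivAt ψ (μ θ) θ)
    (hμ : ∀ θ, HasDerivAt μ (dμ θ) θ) (hdμcont : Continuous dμ) (hdμpos : ∀ θ, 0 < dμ θ)
    (μinv : ℝ → ℝ) (hinvl : ∀ θ, μinv (μ θ) = θ) (hinvr : ∀ y, μ (μinv y) = y)
    (C : ℝ)
    (R : ℝ → ℝ) (hR : ∀ x, R x = ∫ t in Iic x, r t)
    (Q : ℕ → (ℕ → ℝ) → ℕ → ℝ)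
    (hQ : ∀ m b i, Q m b i =
      (if i = m then 1 else R (b (i + 1))) - (if i = 0 then 0 else R (b i)))
    (M : ℕ → (ℕ → ℝ) → ℕ → ℝ)
    (hM : ∀ m b i, M m b i =
      (if i = m then ∫ t, t * r t else ∫ t in Iic (b (i + 1)), t * r t) -
      (if i = 0 then 0 else ∫ t in Iic (b i), t * r t))
    (TH : ℕ → (ℕ → ℝ) → ℕ → ℝ) (hTH : ∀ m b i, TH m b i = μinv (M m b i / Q m b i))
    (I1 : ℕ → (ℕ → ℝ) → ℝ)
    (hI1 : ∀ m b, I1 m b = C - ∑ i ∈ Finset.range (m + 1),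
      Q m b i * (Real.log (Q m b i) + TH m b i * μ (TH m b i) - ψ (TH m b i)))
    (A : ℕ → Set (ℕ → ℝ))
    (hA : ∀ m, A m = {b | (∀ i, 1 ≤ i → i ≤ m → b i ∈ X) ∧
      ∀ i j, 1 ≤ i → i < j → j ≤ m → b i < b j})
    (amin : ℕ → (ℕ → ℝ))
    (hmem : ∀ m, 1 ≤ m → amin m ∈ A m)
    (hmin : ∀ m, 1 ≤ m → ∀ b ∈ A m, I1 m (amin m) ≤ I1 m b) :
    ∀ m k, 1 ≤ m → m ≤ k → I1 k (amin k) ≤ I1 m (amin m) := by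
  -- basic continuity facts
  have hμcont : Continuous μ := by
    rw [continuous_iff_continuousAt]; exact fun x => (hμ x).continuousAt
  have hψcont : Continuous ψ := by
    rw [continuous_iff_continuousAt]; exact fun x => (hψ x).continuousAt
  have hμsm : StrictMono μ := strictMono_of_hasDerivAt_pos hμ hdμpos
  have hμsurj : Function.Surjective μ := fun y => ⟨μinv y, hinvr y⟩
  have hμinvcont : Continuous μinv := by
    have e : ℝ ≃o ℝ := StrictMono.orderIsoOfSurjective μ hμsm hμsurj
    have heq : μinv = (StrictMono.orderIsoOfSurjective μ hμsm hμsurj).symm := by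
      funext y
      have h1 : μ ((StrictMono.orderIsoOfSurjective μ hμsm hμsurj).symm y) = y :=
        (StrictMono.orderIsoOfSurjective μ hμsm hμsurj).apply_symm_apply y
      calc μinv y = μinv (μ ((StrictMono.orderIsoOfSurjective μ hμsm hμsurj).symm y)) := by
            rw [h1]
        _ = _ := hinvl _
    rw [heq]
    exact ((StrictMono.orderIsoOfSurjective μ hμsm hμsurj).toHomeomorph).continuous_invFun
  set G : ℝ → ℝ := fun x => ∫ t in Iic x, t * r t with hGdef
  set T : ℝ := ∫ t, t * r t with hTdef
  have hRdiff : ∀ a b : ℝ, R b - R a = ∫ t in a..b, r t := by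
    intro a b
    rw [hR, hR]
    exact intervalIntegral.integral_Iic_sub_Iic hint.integrableOn hint.integrableOn
  have hGdiff : ∀ a b : ℝ, G b - G a = ∫ t in a..b, t * r t := fun a b =>
    intervalIntegral.integral_Iic_sub_Iic hint1.integrableOn hint1.integrableOn
  have hRcont : Continuous R := by
    have h1 := intervalIntegral.continuous_primitive (fun a b => hint.intervalIntegrable) 0
    have h2 : R = fun x => R 0 + ∫ t in (0:ℝ)..x, r t := by
      funext x; rw [← hRdiff 0 x]; ring
    rw [h2]; exact continuous_const.add h1
  have hGcont : Continuous G := by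
    have h1 := intervalIntegral.continuous_primitive (fun a b => hint1.intervalIntegrable) 0
    have h2 : G = fun x => G 0 + ∫ t in (0:ℝ)..x, t * r t := by
      funext x; rw [← hGdiff 0 x]; ring
    rw [h2]; exact continuous_const.add h1
  -- the auxiliary functions
  set h : ℝ → ℝ := fun v => μinv v * μ (μinv v) - ψ (μinv v) with hhdef
  have hhcont : Continuous h := by
    exact (hμinvcont.mul (hμcont.comp hμinvcont)).sub (hψcont.comp hμinvcont)
  set F : ℝ → ℝ → ℝ := fun q v => q * (Real.log q + h (v / q)) with hFdef
  have hterm : ∀ m b i, Q m b i * (Real.log (Q m b i) + TH m b i * μ (TH m b i) - ψ (TH m b i))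
      = F (Q m b i) (M m b i) := by
    intro m b i
    rw [hTH]
    show _ = _ * (_ + (μinv _ * μ (μinv _) - ψ (μinv _)))
    ring
  have hI1' : ∀ m b, I1 m b = C - ∑ i ∈ Finset.range (m + 1), F (Q m b i) (M m b i) := by
    intro m b
    rw [hI1]
    congr 1
    exact Finset.sum_congr rfl fun i _ => hterm m b i
  -- positivity of tail mass
  have htail : ∀ x : ℝ, 0 < 1 - R x := by
    intro x
    have hIic : IntegrableOn r (Iic x) := hint.integrableOn
    have hIoi : IntegrableOn r (Ioi x) := hint.integrableOn
    have hsum : R x + ∫ t in Ioi x, r t = 1 := by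
      rw [hR, ← hnorm]
      exact intervalIntegral.integral_Iic_add_Ioi hIic hIoi
    have hpos : 0 < ∫ t in Ioi x, r t := by
      rw [setIntegral_pos_iff_support_of_nonneg_ae]
      · have : Function.support r = univ := by
          ext y; simp [Function.support, (hrpos y).ne']
        rw [this, univ_inter, Real.volume_Ioi]
        simp
      · exact Filter.Eventually.of_forall fun y => (hrpos y).le
      · exact hIoi
    linarith
  -- main step
  have step : ∀ m, 1 ≤ m → I1 (m + 1) (amin (m + 1)) ≤ I1 m (amin m) := by
    intro m hm
    set b : ℕ → ℝ := amin m with hbdef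
    have hbA := hmem m hm
    rw [hA] at hbA
    obtain ⟨hbX, hbord⟩ := hbA
    set bm : ℝ := b m with hbmdef
    have hbmX : bm ∈ X := hbX m hm le_rfl
    set b2 : ℝ → ℕ → ℝ := fun t => Function.update b (m + 1) t with hb2def
    have hb2ne : ∀ t i, i ≠ m + 1 → b2 t i = b i := fun t i hi =>
      Function.update_of_ne hi _ _
    have hb2eq : ∀ t, b2 t (m + 1) = t := fun t => Function.update_self _ _ _
    -- cell quantities
    have hQlow : ∀ t i, i < m → Q (m + 1) (b2 t) i = Q m b i := by
      intro t i hi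
      rw [hQ, hQ, hb2ne t (i + 1) (by omega), hb2ne t i (by omega),
        if_neg (show i ≠ m + 1 by omega), if_neg (show i ≠ m by omega)]
    have hMlow : ∀ t i, i < m → M (m + 1) (b2 t) i = M m b i := by
      intro t i hi
      rw [hM, hM, hb2ne t (i + 1) (by omega), hb2ne t i (by omega),
        if_neg (show i ≠ m + 1 by omega), if_neg (show i ≠ m by omega)]
    have hQm : ∀ t, Q (m + 1) (b2 t) m = R t - R bm := by
      intro t
      rw [hQ, if_neg (show m ≠ m + 1 by omega), if_neg (show m ≠ 0 by omega), hb2eq,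
        hb2ne t m (by omega)]
    have hMm : ∀ t, M (m + 1) (b2 t) m = G t - G bm := by
      intro t
      rw [hM, if_neg (show m ≠ m + 1 by omega), if_neg (show m ≠ 0 by omega), hb2eq,
        hb2ne t m (by omega)]
    have hQtop : ∀ t, Q (m + 1) (b2 t) (m + 1) = 1 - R t := by
      intro t
      rw [hQ, if_pos rfl, if_neg (show m + 1 ≠ 0 by omega), hb2eq]
    have hMtop : ∀ t, M (m + 1) (b2 t) (m + 1) = T - G t := by
      intro t
      rw [hM, if_pos rfl, if_neg (show m + 1 ≠ 0 by omega), hb2eq]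
    have hQold : Q m b m = 1 - R bm := by
      rw [hQ, if_pos rfl, if_neg (show m ≠ 0 by omega)]
    have hMold : M m b m = T - G bm := by
      rw [hM, if_pos rfl, if_neg (show m ≠ 0 by omega)]
    -- splitting the sum
    have hsplit : ∀ t, I1 (m + 1) (b2 t) =
        (I1 m b + F (1 - R bm) (T - G bm)) - F (R t - R bm) (G t - G bm)
          - F (1 - R t) (T - G t) := by
      intro t
      rw [hI1' (m + 1) (b2 t), hI1' m b]
      rw [Finset.sum_range_succ, Finset.sum_range_succ, Finset.sum_range_succ (n := m)]
      rw [hQm, hMm, hQtop, hMtop, hQold, hMold]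
      have hsum : ∑ i ∈ Finset.range m, F (Q (m + 1) (b2 t) i) (M (m + 1) (b2 t) i)
          = ∑ i ∈ Finset.range m, F (Q m b i) (M m b i) := by
        refine Finset.sum_congr rfl fun i hi => ?_
        rw [hQlow t i (Finset.mem_range.mp hi), hMlow t i (Finset.mem_range.mp hi)]
      rw [hsum]
      ring
    -- tendsto statements
    have hQt0 : Tendsto (fun t => R t - R bm) (𝓝[>] bm) (𝓝 0) := by
      have h0 : Tendsto (fun t : ℝ => R t - R bm) (𝓝 bm) (𝓝 (R bm - R bm)) :=
        Tendsto.sub (hRcont.tendsto bm) tendsto_const_nhds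
      have := h0.mono_left (nhdsWithin_le_nhds (s := Ioi bm))
      simpa using this
    have hQtpos : ∀ t ∈ Ioi bm, 0 < R t - R bm := by
      intro t ht
      rw [hRdiff]
      exact intervalIntegral.intervalIntegral_pos_of_pos_on hint.intervalIntegrable
        (fun x _ => hrpos x) ht
    -- squeeze for the ratio
    have hratio : Tendsto (fun t => (G t - G bm) / (R t - R bm)) (𝓝[>] bm) (𝓝 bm) := by
      have hbnd : ∀ t ∈ Ioi bm, bm ≤ (G t - G bm) / (R t - R bm)
          ∧ (G t - G bm) / (R t - R bm) ≤ t := by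
        intro t ht
        have hq := hQtpos t ht
        have hlt : bm < t := ht
        have hQint : IntervalIntegrable r volume bm t := hint.intervalIntegrable
        have hGint : IntervalIntegrable (fun x => x * r x) volume bm t :=
          hint1.intervalIntegrable
        have hlow : bm * (R t - R bm) ≤ G t - G bm := by
          rw [hRdiff, hGdiff, ← intervalIntegral.integral_const_mul]
          exact intervalIntegral.integral_mono_on hlt.le (hQint.const_mul bm) hGint
            (fun x hx => mul_le_mul_of_nonneg_right hx.1 (hrpos x).le)
        have hhigh : G t - G bm ≤ t * (R t - R bm) := by
          rw [hRdiff, hGdiff, ← intervalIntegral.integral_const_mul]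
          exact intervalIntegral.integral_mono_on hlt.le hGint (hQint.const_mul t)
            (fun x hx => mul_le_mul_of_nonneg_right hx.2 (hrpos x).le)
        constructor
        · rw [le_div_iff₀ hq]; exact hlow
        · rw [div_le_iff₀ hq]; exact hhigh
      refine tendsto_of_tendsto_of_tendsto_of_le_of_le'
        (tendsto_const_nhds) (tendsto_id.mono_left nhdsWithin_le_nhds) ?_ ?_
      · exact eventually_mem_nhdsWithin.mono fun t ht => (hbnd t ht).1
      · exact eventually_mem_nhdsWithin.mono fun t ht => (hbnd t ht).2
    -- part (a): new small cell term → 0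
    have hparta : Tendsto (fun t => F (R t - R bm) (G t - G bm)) (𝓝[>] bm) (𝓝 0) := by
      have h1 : Tendsto (fun t => (R t - R bm) * Real.log (R t - R bm)) (𝓝[>] bm) (𝓝 0) := by
        have := (Real.continuous_mul_log.tendsto 0).comp hQt0
        simpa [Function.comp_def] using this
      have h2 : Tendsto (fun t => (R t - R bm) * h ((G t - G bm) / (R t - R bm)))
          (𝓝[>] bm) (𝓝 0) := by
        have := hQt0.mul ((hhcont.tendsto bm).comp hratio)
        simpa using this
      have := h1.add h2
      simp only [add_zero] at this
      refine this.congr fun t => ?_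
      show _ = F _ _
      rw [hFdef]
      ring
    -- part (b): last cell term converges
    have hpartb : Tendsto (fun t => F (1 - R t) (T - G t)) (𝓝[>] bm)
        (𝓝 (F (1 - R bm) (T - G bm))) := by
      have hq0 : (0:ℝ) < 1 - R bm := htail bm
      have hqt : Tendsto (fun t => 1 - R t) (𝓝[>] bm) (𝓝 (1 - R bm)) :=
        (tendsto_const_nhds.sub (hRcont.tendsto bm)).mono_left nhdsWithin_le_nhds
      have hvt : Tendsto (fun t => T - G t) (𝓝[>] bm) (𝓝 (T - G bm)) :=
        (tendsto_const_nhds.sub (hGcont.tendsto bm)).mono_left nhdsWithin_le_nhds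
      have hlog : Tendsto (fun t => Real.log (1 - R t)) (𝓝[>] bm)
          (𝓝 (Real.log (1 - R bm))) :=
        (Real.continuousAt_log hq0.ne').tendsto.comp hqt
      have hdiv : Tendsto (fun t => (T - G t) / (1 - R t)) (𝓝[>] bm)
          (𝓝 ((T - G bm) / (1 - R bm))) := hvt.div hqt hq0.ne'
      exact hqt.mul (hlog.add ((hhcont.tendsto _).comp hdiv))
    -- combine
    have htend : Tendsto (fun t => I1 (m + 1) (b2 t)) (𝓝[>] bm) (𝓝 (I1 m b)) := by
      have := (tendsto_const_nhds (x := I1 m b + F (1 - R bm) (T - G bm))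
        (f := 𝓝[>] bm)).sub hparta |>.sub hpartb
      have h2 : (I1 m b + F (1 - R bm) (T - G bm)) - 0 - F (1 - R bm) (T - G bm)
          = I1 m b := by ring
      rw [h2] at this
      exact this.congr fun t => (hsplit t).symm
    -- eventual membership
    have hmemev : ∀ᶠ t in 𝓝[>] bm, b2 t ∈ A (m + 1) := by
      have hXev : ∀ᶠ t in 𝓝[>] bm, t ∈ X :=
        (hX.eventually_mem hbmX).filter_mono nhdsWithin_le_nhds
      filter_upwards [hXev, eventually_mem_nhdsWithin] with t htX htgt
      rw [hA]
      constructor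
      · intro i h1 h2
        rcases eq_or_ne i (m + 1) with rfl | hi
        · rw [hb2eq]; exact htX
        · rw [hb2ne t i hi]; exact hbX i h1 (by omega)
      · intro i j h1 h2 h3
        rcases eq_or_ne j (m + 1) with rfl | hj
        · rw [hb2eq, hb2ne t i (by omega)]
          rcases eq_or_ne i m with rfl | him
          · exact htgt
          · exact lt_trans (hbord i m h1 (by omega) le_rfl) htgt
        · rw [hb2ne t i (by omega), hb2ne t j hj]
          exact hbord i j h1 h2 (by omega)
    -- conclude
    have hfin : ∀ᶠ t in 𝓝[>] bm, I1 (m + 1) (amin (m + 1)) ≤ I1 (m + 1) (b2 t) := by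
      filter_upwards [hmemev] with t ht
      exact hmin (m + 1) (by omega) (b2 t) ht
    exact ge_of_tendsto htend hfin
  -- induction
  intro m k hm hmk
  induction k, hmk using Nat.le_induction with
  | base => exact le_refl _
  | succ k hk ih => exact le_trans (step k (by omega)) ih
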